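/- Let q ≥ 5 be an odd prime power and let p_1(x) ≠ p_2(x) be two distinct monic irreducible quadratic polynomials in F_q[x]. Then the set of pairs (a_1,b_1) ∈ F_q²∖{(0,0)} for which there exist a pair (a_2,b_2) ∈ F_q²∖{(0,0)} and a polynomial f ∈ F_q[x] of degree at most q−4 with (a_1+b_1x)/p_1(x) = (a_2+b_2x)/p_2(x) + f(x) for all x ∈ F_q has cardinality exactly q−1. -/

import Mathlib

open Polynomial

namespace Stmt10Aux

variable {F : Type*} [Field F] [Fintype F] [DecidableEq F]

lemma no_root {p : F[X]} (hirr : Irreducible p) (hd : p.natDegree = 2) (x : F) :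
    p.eval x ≠ 0 := by
  intro h
  obtain ⟨u, hu⟩ := (dvd_iff_isRoot (p := p) (a := x)).mpr h
  have hu0 : u ≠ 0 := by
    rintro rfl
    exact hirr.ne_zero (by simpa using hu)
  rcases hirr.isUnit_or_isUnit hu with h1 | h2
  · exact Polynomial.not_isUnit_X_sub_C x h1
  · have h2' : u.natDegree = 0 := natDegree_eq_zero_of_isUnit h2
    have : p.natDegree = 1 := by
      rw [hu, natDegree_mul (X_sub_C_ne_zero x) hu0, natDegree_X_sub_C, h2']
    omega

lemma eq_of_dvd {p q : F[X]} (hp : p.Monic) (hq : q.Monic)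
    (hiq : Irreducible q) (hip : Irreducible p) (hdvd : p ∣ q) : p = q := by
  obtain ⟨v, hv⟩ := hdvd
  rcases hiq.isUnit_or_isUnit hv with h | h
  · exact absurd h hip.not_isUnit
  · exact eq_of_monic_of_associated hp hq ⟨h.unit, by rw [hv, IsUnit.unit_spec]⟩

lemma degree_linear_le (a b : F) : (C a + C b * X).degree ≤ 1 := by
  compute_degree

/-- linear independence of 1 and the root -/
lemma indep {p : F[X]} (hirr : Irreducible p) (hd : p.natDegree = 2) {a b : F}
    (h : algebraMap F (AdjoinRoot p) a + algebraMap F (AdjoinRoot p) b * AdjoinRoot.root p = 0) :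
    a = 0 ∧ b = 0 := by
  have h' : (AdjoinRoot.mk p) (C a + C b * X) = 0 := by
    rw [map_add, map_mul, AdjoinRoot.mk_C, AdjoinRoot.mk_X, ← AdjoinRoot.algebraMap_eq]
    exact h
  have hdvd : p ∣ C a + C b * X := (AdjoinRoot.mk_eq_zero).mp h'
  have h0 : C a + C b * X = 0 := by
    refine Polynomial.eq_zero_of_dvd_of_degree_lt hdvd ?_
    have : p.degree = (2 : ℕ) := by
      rw [degree_eq_natDegree hirr.ne_zero, hd]
    rw [this]
    exact lt_of_le_of_lt (degree_linear_le a b) (by norm_num)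
  constructor
  · simpa using congrArg (fun r => Polynomial.coeff r 0) h0
  · simpa using congrArg (fun r => Polynomial.coeff r 1) h0

/-- every element of the quotient is a + b * root -/
lemma repr_exists {p : F[X]} (hm : p.Monic) (hd : p.natDegree = 2) (z : AdjoinRoot p) :
    ∃ a b : F, algebraMap F (AdjoinRoot p) a + algebraMap F (AdjoinRoot p) b * AdjoinRoot.root p
      = z := by
  obtain ⟨g, rfl⟩ := AdjoinRoot.mk_surjective z
  set r := g %ₘ p with hr
  have hdeg : r.natDegree ≤ 1 := by
    have h2 : r.degree < p.degree := degree_modByMonic_lt g hm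
    rcases eq_or_ne r 0 with h0 | h0
    · simp [h0]
    · have := natDegree_lt_natDegree h0 h2
      omega
  have hrXC : r = C (r.coeff 1) * X + C (r.coeff 0) := eq_X_add_C_of_natDegree_le_one hdeg
  refine ⟨r.coeff 0, r.coeff 1, ?_⟩
  have hmk : AdjoinRoot.mk p g = AdjoinRoot.mk p r := by
    rw [hr, modByMonic_eq_sub_mul_div g p, map_sub, map_mul, AdjoinRoot.mk_self, zero_mul,
      sub_zero]
  rw [hmk]
  conv_rhs => rw [hrXC]
  rw [map_add, map_mul, AdjoinRoot.mk_C, AdjoinRoot.mk_C, AdjoinRoot.mk_X,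
    ← AdjoinRoot.algebraMap_eq]
  ring

lemma M_dvd_of_eval_zero {G : F[X]} (h : ∀ x : F, G.eval x = 0) :
    (X ^ (Fintype.card F) - X : F[X]) ∣ G := by
  have hq1 : 1 < Fintype.card F := Fintype.one_lt_card
  have hM : (X ^ (Fintype.card F) - X : F[X]).Monic := by
    have : ((X : F[X])).degree < ((X : F[X]) ^ Fintype.card F).degree := by
      rw [degree_X_pow, degree_X]
      exact_mod_cast hq1
    exact (monic_X_pow _).sub_of_left this
  set M : F[X] := X ^ (Fintype.card F) - X with hMdef
  set r := G %ₘ M with hrdef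
  have hMeval : ∀ x : F, M.eval x = 0 := by
    intro x
    simp [hMdef, FiniteField.pow_card]
  have hreval : ∀ x : F, r.eval x = 0 := by
    intro x
    have := modByMonic_add_div G M
    have h2 := congrArg (Polynomial.eval x) this
    simp only [eval_add, eval_mul, hMeval x, zero_mul, add_zero] at h2
    rw [← hrdef] at h2
    rw [h2, h x]
  have hr0 : r = 0 := by
    apply Polynomial.eq_zero_of_natDegree_lt_card_of_eval_eq_zero r Function.injective_id hreval
    have hlt : r.degree < M.degree := degree_modByMonic_lt G hM
    have hMdeg : M.natDegree = Fintype.card F := by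
      rw [hMdef]
      exact FiniteField.X_pow_card_sub_X_natDegree_eq F hq1
    rcases eq_or_ne r 0 with h0 | h0
    · simpa [h0] using Fintype.card_pos
    · have := natDegree_lt_natDegree h0 hlt
      omega
  exact (modByMonic_eq_zero_iff_dvd hM).mp hr0

lemma root_pow_card_ne {p : F[X]} [Fact (Irreducible p)] (hd : p.natDegree = 2) :
    (AdjoinRoot.root p) ^ (Fintype.card F) - AdjoinRoot.root p ≠ 0 := by
  intro h
  have hirr := Fact.out (p := Irreducible p)
  have hq1 : 1 < Fintype.card F := Fintype.one_lt_card
  have h' : AdjoinRoot.mk p ((X : F[X]) ^ Fintype.card F - X) = 0 := by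
    rw [map_sub, map_pow, AdjoinRoot.mk_X]
    exact h
  have hdvd : p ∣ (X : F[X]) ^ Fintype.card F - X := AdjoinRoot.mk_eq_zero.mp h'
  have hM0 : ((X : F[X]) ^ Fintype.card F - X) ≠ 0 := FiniteField.X_pow_card_sub_X_ne_zero F hq1
  have hsplit : Splits ((X : F[X]) ^ Fintype.card F - X) := by
    rw [splits_iff_card_roots, FiniteField.roots_X_pow_card_sub_X,
      FiniteField.X_pow_card_sub_X_natDegree_eq F hq1]
    simp
  have hsp : Splits p := hsplit.of_dvd hM0 hdvd
  obtain ⟨x, hx⟩ := hsp.exists_eval_eq_zero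
    (by rw [degree_eq_natDegree hirr.ne_zero, hd]; exact (by norm_num))
  exact no_root hirr hd x (by simpa using hx)

lemma mk_other_ne {p q : F[X]} (hp : p.Monic) (hq : q.Monic) (hip : Irreducible p)
    (hiq : Irreducible q) (hne : p ≠ q) : AdjoinRoot.mk p q ≠ 0 := by
  intro h
  exact hne (eq_of_dvd hp hq hiq hip (AdjoinRoot.mk_eq_zero.mp h))

lemma natDegree_linear_le {a b : F} : (C a + C b * X).natDegree ≤ 1 := by
  compute_degree

lemma key (hq : 5 ≤ Fintype.card F) {p1 p2 : F[X]}
    [Fact (Irreducible p1)] [Fact (Irreducible p2)]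
    (hm1 : p1.Monic) (hi1 : Irreducible p1) (hd1 : p1.natDegree = 2)
    (hm2 : p2.Monic) (hi2 : Irreducible p2) (hd2 : p2.natDegree = 2)
    (hne : p1 ≠ p2) {a0 b0 : F}
    (hab0 : algebraMap F (AdjoinRoot p1) a0 + algebraMap F (AdjoinRoot p1) b0 * AdjoinRoot.root p1
      = (AdjoinRoot.root p1 ^ Fintype.card F - AdjoinRoot.root p1) / AdjoinRoot.mk p1 p2)
    (ab : F × F) :
    (ab ≠ (0, 0) ∧ ∃ a2 b2 : F, (a2, b2) ≠ (0, 0) ∧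
        ∃ f : F[X], f.degree ≤ ((Fintype.card F - 4 : ℕ) : WithBot ℕ) ∧
          ∀ x : F, (ab.1 + ab.2 * x) / p1.eval x
            = (a2 + b2 * x) / p2.eval x + f.eval x)
    ↔ ∃ c : F, c ≠ 0 ∧ ab.1 = c * a0 ∧ ab.2 = c * b0 := by
  obtain ⟨a, b⟩ := ab
  have hq1 : 1 < Fintype.card F := Fintype.one_lt_card
  have hP2 : AdjoinRoot.mk p1 p2 ≠ 0 := mk_other_ne hm1 hm2 hi1 hi2 hne
  have hT : (AdjoinRoot.root p1) ^ (Fintype.card F) - AdjoinRoot.root p1 ≠ 0 :=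
    root_pow_card_ne hd1
  constructor
  · rintro ⟨habne, a2, b2, -, f, hdeg, heq⟩
    simp only at heq ⊢
    set G : F[X] := (C a + C b * X) * p2 - (C a2 + C b2 * X) * p1 - f * (p1 * p2) with hGdef
    have heval : ∀ x : F, G.eval x = 0 := by
      intro x
      have h1 := no_root hi1 hd1 x
      have h2 := no_root hi2 hd2 x
      have hx := heq x
      field_simp at hx
      simp only [hGdef, eval_sub, eval_mul, eval_add, eval_C, eval_X]
      linear_combination hx
    obtain ⟨g, hg⟩ := M_dvd_of_eval_zero heval
    have hf' : f.natDegree ≤ Fintype.card F - 4 := natDegree_le_iff_degree_le.mpr hdeg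
    have e1 : ((C a + C b * X) * p2).natDegree ≤ 3 := by
      refine le_trans natDegree_mul_le ?_
      have h := natDegree_linear_le (a := a) (b := b)
      omega
    have e2 : ((C a2 + C b2 * X) * p1).natDegree ≤ 3 := by
      refine le_trans natDegree_mul_le ?_
      have h := natDegree_linear_le (a := a2) (b := b2)
      omega
    have e3 : (f * (p1 * p2)).natDegree ≤ Fintype.card F := by
      refine le_trans natDegree_mul_le ?_
      have h := natDegree_mul_le (p := p1) (q := p2)
      omega
    have hGdeg : G.natDegree ≤ Fintype.card F := by
      refine le_trans (natDegree_sub_le _ _) (max_le (le_trans (natDegree_sub_le _ _)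
        (max_le (by omega) (by omega))) (by omega))
    have hc : ∃ c, g = C c := by
      rcases eq_or_ne g 0 with rfl | hg0
      · exact ⟨0, by simp⟩
      · have hM0 : ((X : F[X]) ^ Fintype.card F - X) ≠ 0 :=
          FiniteField.X_pow_card_sub_X_ne_zero F hq1
        have hGn : G.natDegree = Fintype.card F + g.natDegree := by
          rw [hg, natDegree_mul hM0 hg0, FiniteField.X_pow_card_sub_X_natDegree_eq F hq1]
        have hg' : g.natDegree = 0 := by omega
        obtain ⟨c, hc⟩ := natDegree_eq_zero.mp hg'
        exact ⟨c, hc.symm⟩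
    obtain ⟨c, rfl⟩ := hc
    have hKey := congrArg (AdjoinRoot.mk p1) hg
    simp only [hGdef, map_sub, map_mul, map_add, map_pow, AdjoinRoot.mk_X, AdjoinRoot.mk_C,
      AdjoinRoot.mk_self, mul_zero, zero_mul, sub_zero, ← AdjoinRoot.algebraMap_eq] at hKey
    have hcne : c ≠ 0 := by
      rintro rfl
      rw [map_zero, mul_zero] at hKey
      rcases mul_eq_zero.mp hKey with h | h
      · obtain ⟨ha, hb⟩ := indep hi1 hd1 h
        exact habne (by simp [ha, hb])
      · exact hP2 h
    refine ⟨c, hcne, ?_, ?_⟩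
    · have h5 : algebraMap F (AdjoinRoot p1) a + algebraMap F (AdjoinRoot p1) b
          * AdjoinRoot.root p1
          = algebraMap F (AdjoinRoot p1) c * (algebraMap F (AdjoinRoot p1) a0
            + algebraMap F (AdjoinRoot p1) b0 * AdjoinRoot.root p1) := by
        apply mul_right_cancel₀ hP2
        rw [hKey, hab0, mul_assoc, div_mul_cancel₀ _ hP2, mul_comm]
      have h6 : algebraMap F (AdjoinRoot p1) (a - c * a0)
          + algebraMap F (AdjoinRoot p1) (b - c * b0) * AdjoinRoot.root p1 = 0 := by
        rw [map_sub, map_sub, map_mul, map_mul]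
        linear_combination h5
      obtain ⟨ha, hb⟩ := indep hi1 hd1 h6
      exact sub_eq_zero.mp ha
    · have h5 : algebraMap F (AdjoinRoot p1) a + algebraMap F (AdjoinRoot p1) b
          * AdjoinRoot.root p1
          = algebraMap F (AdjoinRoot p1) c * (algebraMap F (AdjoinRoot p1) a0
            + algebraMap F (AdjoinRoot p1) b0 * AdjoinRoot.root p1) := by
        apply mul_right_cancel₀ hP2
        rw [hKey, hab0, mul_assoc, div_mul_cancel₀ _ hP2, mul_comm]
      have h6 : algebraMap F (AdjoinRoot p1) (a - c * a0)
          + algebraMap F (AdjoinRoot p1) (b - c * b0) * AdjoinRoot.root p1 = 0 := by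
        rw [map_sub, map_sub, map_mul, map_mul]
        linear_combination h5
      obtain ⟨ha, hb⟩ := indep hi1 hd1 h6
      exact sub_eq_zero.mp hb
  · rintro ⟨c, hc, ha, hb⟩
    simp only at ha hb
    subst ha hb
    have hab0ne : ¬(a0 = 0 ∧ b0 = 0) := by
      rintro ⟨rfl, rfl⟩
      rw [map_zero, zero_mul, add_zero] at hab0
      rcases div_eq_zero_iff.mp hab0.symm with h | h
      · exact hT h
      · exact hP2 h
    constructor
    · intro h
      rw [Prod.mk.injEq] at h
      exact hab0ne ⟨by rcases mul_eq_zero.mp h.1 with h' | h' <;> tauto,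
        by rcases mul_eq_zero.mp h.2 with h' | h' <;> tauto⟩
    · have hP1 : AdjoinRoot.mk p2 p1 ≠ 0 := mk_other_ne hm2 hm1 hi2 hi1 hne.symm
      have hT2 : (AdjoinRoot.root p2) ^ (Fintype.card F) - AdjoinRoot.root p2 ≠ 0 :=
        root_pow_card_ne hd2
      have hcK2 : algebraMap F (AdjoinRoot p2) c ≠ 0 := by
        intro h
        exact hc ((algebraMap F (AdjoinRoot p2)).injective (by simpa using h))
      set z : AdjoinRoot p2 :=
        -(algebraMap F (AdjoinRoot p2) c
          * ((AdjoinRoot.root p2) ^ (Fintype.card F) - AdjoinRoot.root p2))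
          / AdjoinRoot.mk p2 p1 with hzdef
      have hz : z ≠ 0 := div_ne_zero (neg_ne_zero.mpr (mul_ne_zero hcK2 hT2)) hP1
      obtain ⟨a2, b2, hab2⟩ := repr_exists hm2 hd2 z
      have hab2ne : (a2, b2) ≠ (0, 0) := by
        intro h
        rw [Prod.mk.injEq] at h
        rw [h.1, h.2, map_zero, zero_mul, add_zero] at hab2
        exact hz hab2.symm
      refine ⟨a2, b2, hab2ne, ?_⟩
      set G : F[X] := (C (c * a0) + C (c * b0) * X) * p2 - (C a2 + C b2 * X) * p1
        - C c * ((X : F[X]) ^ Fintype.card F - X) with hGdef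
      have hdvd1 : p1 ∣ G := by
        rw [← AdjoinRoot.mk_eq_zero]
        simp only [hGdef, map_sub, map_mul, map_add, map_pow, AdjoinRoot.mk_X, AdjoinRoot.mk_C,
          AdjoinRoot.mk_self, mul_zero, sub_zero, ← AdjoinRoot.algebraMap_eq]
        rw [sub_eq_zero]
        have h7 : algebraMap F (AdjoinRoot p1) c * algebraMap F (AdjoinRoot p1) a0
            + algebraMap F (AdjoinRoot p1) c * algebraMap F (AdjoinRoot p1) b0
              * AdjoinRoot.root p1
            = algebraMap F (AdjoinRoot p1) c * (algebraMap F (AdjoinRoot p1) a0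
              + algebraMap F (AdjoinRoot p1) b0 * AdjoinRoot.root p1) := by ring
        rw [h7, hab0, mul_assoc, div_mul_cancel₀ _ hP2]
      have hdvd2 : p2 ∣ G := by
        rw [← AdjoinRoot.mk_eq_zero]
        simp only [hGdef, map_sub, map_mul, map_add, map_pow, AdjoinRoot.mk_X, AdjoinRoot.mk_C,
          AdjoinRoot.mk_self, mul_zero, zero_mul, sub_zero, ← AdjoinRoot.algebraMap_eq]
        rw [hab2, hzdef, div_mul_cancel₀ _ hP1]
        ring
      have hcop : IsCoprime p1 p2 :=
        hi1.coprime_iff_not_dvd.mpr (fun h => hne (eq_of_dvd hm1 hm2 hi2 hi1 h))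
      obtain ⟨f, hf⟩ := hcop.mul_dvd hdvd1 hdvd2
      refine ⟨f, ?_, ?_⟩
      · rcases eq_or_ne f 0 with rfl | hf0
        · simp
        · have e1 : ((C (c * a0) + C (c * b0) * X) * p2).natDegree ≤ 3 := by
            refine le_trans natDegree_mul_le ?_
            have h := natDegree_linear_le (a := c * a0) (b := c * b0)
            omega
          have e2 : ((C a2 + C b2 * X) * p1).natDegree ≤ 3 := by
            refine le_trans natDegree_mul_le ?_
            have h := natDegree_linear_le (a := a2) (b := b2)
            omega
          have e3 : (C c * ((X : F[X]) ^ Fintype.card F - X)).natDegree ≤ Fintype.card F := by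
            refine le_trans natDegree_mul_le ?_
            have h := FiniteField.X_pow_card_sub_X_natDegree_eq F hq1
            have h2 := natDegree_C (a := c)
            omega
          have hGdeg : G.natDegree ≤ Fintype.card F := by
            refine le_trans (natDegree_sub_le _ _) (max_le (le_trans (natDegree_sub_le _ _)
              (max_le (by omega) (by omega))) (by omega))
          have hp12 : p1 * p2 ≠ 0 := mul_ne_zero hm1.ne_zero hm2.ne_zero
          have hGn : G.natDegree = (p1 * p2).natDegree + f.natDegree := by
            rw [hf, natDegree_mul hp12 hf0]
          have h12 : (p1 * p2).natDegree = 4 := by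
            rw [natDegree_mul hm1.ne_zero hm2.ne_zero, hd1, hd2]
          have hfn : f.natDegree ≤ Fintype.card F - 4 := by omega
          exact le_trans degree_le_natDegree (by exact_mod_cast hfn)
      · intro x
        simp only
        have h1 := no_root hi1 hd1 x
        have h2 := no_root hi2 hd2 x
        have hx := congrArg (Polynomial.eval x) hf
        simp only [hGdef, eval_sub, eval_mul, eval_add, eval_C, eval_X, eval_pow,
          FiniteField.pow_card, sub_self, mul_zero, sub_zero] at hx
        field_simp
        linear_combination hx

end Stmt10Aux

open Stmt10Aux

/-- For odd `q ≥ 5` and distinct monic irreducible quadratics `p₁ ≠ p₂`, the set of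
nonzero pairs `(a₁,b₁)` for which `(a₁+b₁x)/p₁(x)` agrees on `F_q` with
`(a₂+b₂x)/p₂(x) + f(x)` for some nonzero `(a₂,b₂)` and some `f` of degree at most
`q - 4` has exactly `q - 1` elements. -/
theorem stmt10 {F : Type*} [Field F] [Fintype F] [DecidableEq F]
    (hq : 5 ≤ Fintype.card F) (hodd : Odd (Fintype.card F))
    (p1 p2 : F[X])
    (hp1 : p1.Monic ∧ Irreducible p1 ∧ p1.natDegree = 2)
    (hp2 : p2.Monic ∧ Irreducible p2 ∧ p2.natDegree = 2)
    (hne : p1 ≠ p2) :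
    Nat.card {ab : F × F // ab ≠ (0, 0) ∧ ∃ a2 b2 : F, (a2, b2) ≠ (0, 0) ∧
        ∃ f : F[X], f.degree ≤ ((Fintype.card F - 4 : ℕ) : WithBot ℕ) ∧
          ∀ x : F, (ab.1 + ab.2 * x) / p1.eval x
            = (a2 + b2 * x) / p2.eval x + f.eval x}
      = Fintype.card F - 1 := by
  obtain ⟨hm1, hi1, hd1⟩ := hp1
  obtain ⟨hm2, hi2, hd2⟩ := hp2
  haveI : Fact (Irreducible p1) := ⟨hi1⟩
  haveI : Fact (Irreducible p2) := ⟨hi2⟩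
  obtain ⟨a0, b0, hab0⟩ := repr_exists hm1 hd1
    ((AdjoinRoot.root p1 ^ Fintype.card F - AdjoinRoot.root p1) / AdjoinRoot.mk p1 p2)
  have key' := fun ab => key hq hm1 hi1 hd1 hm2 hi2 hd2 hne hab0 ab
  have hab0ne : ¬(a0 = 0 ∧ b0 = 0) := by
    rintro ⟨rfl, rfl⟩
    rw [map_zero, zero_mul, add_zero] at hab0
    have hT : (AdjoinRoot.root p1) ^ (Fintype.card F) - AdjoinRoot.root p1 ≠ 0 :=
      root_pow_card_ne hd1
    have hP2 : AdjoinRoot.mk p1 p2 ≠ 0 := mk_other_ne hm1 hm2 hi1 hi2 hne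
    rcases div_eq_zero_iff.mp hab0.symm with h | h
    · exact hT h
    · exact hP2 h
  let e : {c : F // c ≠ 0} → {ab : F × F // ab ≠ (0, 0) ∧ ∃ a2 b2 : F, (a2, b2) ≠ (0, 0) ∧
      ∃ f : F[X], f.degree ≤ ((Fintype.card F - 4 : ℕ) : WithBot ℕ) ∧
        ∀ x : F, (ab.1 + ab.2 * x) / p1.eval x
          = (a2 + b2 * x) / p2.eval x + f.eval x} :=
    fun c => ⟨(c.1 * a0, c.1 * b0), (key' _).mpr ⟨c.1, c.2, rfl, rfl⟩⟩
  have hbij : Function.Bijective e := by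
    constructor
    · rintro ⟨c, hc⟩ ⟨c', hc'⟩ h
      simp only [e, Subtype.mk.injEq, Prod.mk.injEq] at h
      obtain ⟨h1, h2⟩ := h
      apply Subtype.ext
      rcases not_and_or.mp hab0ne with h0 | h0
      · exact mul_right_cancel₀ h0 h1
      · exact mul_right_cancel₀ h0 h2
    · rintro ⟨ab, hab⟩
      obtain ⟨c, hc, h1, h2⟩ := (key' ab).mp hab
      refine ⟨⟨c, hc⟩, Subtype.ext ?_⟩
      simp only [e]
      exact (Prod.ext h1 h2).symm
  rw [← Nat.card_eq_of_bijective e hbij, Nat.card_congr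
    (unitsEquivNeZero (G₀ := F)).symm, Nat.card_units, Nat.card_eq_fintype_card]
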